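/- arXiv:1507.02414 — 5 statements merged into one kernel-verified Lean document; each statement's English description precedes it below -/
import Mathlib

section
/- Assume for a path scenario R there exist M, m ∈ V_C ∪ {s₀,t₀} with s₀ ≤ M, m ≤ t₀ and m ≤ M such that the (M,m)-canonical ride is optimal. Define Ẑ_m = {z ∈ {s₀,t₀} ∪ V_C : m ≤ z, s₀ ≤ z, and no request (s,t) ∈ C has t < m and z < s}. Then Ẑ_m is nonempty and, letting M̂_m = min Ẑ_m, the (M̂_m, m)-canonical ride is optimal. -/
namespace RideSharing

/-- A ride in a graph with adjacency `adj`: a nonempty sequence of nodes where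
consecutive nodes are adjacent. -/
def IsRide (adj : ℕ → ℕ → Prop) (π : List ℕ) : Prop :=
  π ≠ [] ∧ π.Chain' adj

/-- The cost of a ride: sum of the weights of traversed edges. -/
def cost (w : ℕ → ℕ → ℚ) : List ℕ → ℚ
  | [] => 0
  | [_] => 0
  | a :: b :: rest => w a b + cost w (b :: rest)

/-- A ride satisfies a request `(s,t)` if `s` occurs at a time step weakly before
an occurrence of `t`. -/
def Satisfies (π : List ℕ) (s t : ℕ) : Prop :=
  ∃ i j : ℕ, i ≤ j ∧ π[i]? = some s ∧ π[j]? = some t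

/-- `Pre π' π` : `π'` is obtained from `π` by (repeatedly) removing a contiguous
subsequence of nodes (the relation `π' ⪯ π` of the paper, stated with 0-based indices:
`π[1,i] , π[i',len]` becomes `π.take (i+1) ++ π.drop i'`). -/
inductive Pre : List ℕ → List ℕ → Prop
  | refl (π : List ℕ) : Pre π π
  | step (π' π : List ℕ) (i i' : ℕ) :
      i < i' → i' < π.length →
      (π[i + 1]? = π[i']? ∨ π[i]? = π[i' - 1]?) →
      Pre π' (π.take (i + 1) ++ π.drop i') → Pre π' π

/-- A ride-sharing scenario. -/
structure Scenario where
  adj : ℕ → ℕ → Prop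
  w : ℕ → ℕ → ℚ
  s0 : ℕ
  t0 : ℕ
  C : Finset (ℕ × ℕ)

def Feasible (R : Scenario) (π : List ℕ) : Prop :=
  IsRide R.adj π ∧ π.head? = some R.s0 ∧ π.getLast? = some R.t0 ∧
    ∀ r ∈ R.C, Satisfies π r.1 r.2

def Optimal (R : Scenario) (π : List ℕ) : Prop :=
  Feasible R π ∧ ∀ π', Feasible R π' → cost R.w π ≤ cost R.w π'

/-- The set `V_C` of endpoints of requests. -/
def VC (C : Finset (ℕ × ℕ)) : Finset ℕ := C.image Prod.fst ∪ C.image Prod.snd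

/-- The path graph on `{1,…,n}`. -/
def pathAdj (n : ℕ) (a b : ℕ) : Prop :=
  (b = a + 1 ∨ a = b + 1) ∧ 1 ≤ a ∧ a ≤ n ∧ 1 ≤ b ∧ b ≤ n

/-- The monotone segment of the path from `x` to `y`. -/
def seg (x y : ℕ) : List ℕ :=
  if x ≤ y then (List.range (y - x + 1)).map (fun k => x + k)
  else (List.range (x - y + 1)).map (fun k => x - k)

/-- The ride through a list of waypoints, concatenating monotone segments. -/
def rideThrough : List ℕ → List ℕ
  | [] => []
  | [x] => [x]
  | x :: y :: rest => seg x y ++ (rideThrough (y :: rest)).tail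

/-- Concatenation of rides (`π ↦ π'`), inserting the monotone connecting segment
if the endpoints differ. -/
def rconcat (a b : List ℕ) : List ℕ :=
  a ++ (seg (a.getLastD 0) (b.headD 0)).tail ++ b.tail


/-- The restricted scenario `R(M,m)`. -/
def restrict (R : Scenario) (M m : ℕ) : Scenario :=
  ⟨R.adj, R.w, M, m, R.C.filter (fun r => M ≤ r.1 ∧ r.1 ≤ m ∧ M ≤ r.2 ∧ r.2 ≤ m)⟩

/-- `π` is an `(M,m)`-canonical ride for `R` (with `L = left(R)`, `Rt = right(R)`):
`π = π' ↦ π'' ↦ π₃` with `π' = s₀ ↦ M ↦ left ↦ M`, `π'' = M ↦ right` if `m ≤ M`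
and `π'' = π̄ ↦ right` for an optimal ride `π̄` of `R(M,m)` if `M < m`, and
`π₃ = right ↦ m ↦ t₀`. -/
def IsCanonical (R : Scenario) (L Rt M m : ℕ) (π : List ℕ) : Prop :=
  if m ≤ M then
    π = rideThrough [R.s0, M, L, Rt, m, R.t0]
  else
    ∃ πbar, Optimal (restrict R M m) πbar ∧
      π = rconcat (rconcat (rideThrough [R.s0, M, L, M]) (rconcat πbar [Rt]))
            (rideThrough [Rt, m, R.t0])

/-! ### basic list helpers -/

theorem memOfGet {l : List ℕ} {i v : ℕ} (h : l[i]? = some v) : v ∈ l := by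
  obtain ⟨h1, h2⟩ := (List.getElem?_eq_some_iff (l := l)).1 h
  exact h2 ▸ List.getElem_mem _

theorem getOfMem {l : List ℕ} {v : ℕ} (h : v ∈ l) : ∃ i, i < l.length ∧ l[i]? = some v := by
  obtain ⟨i, hlt, hi⟩ := List.mem_iff_getElem.1 h
  exact ⟨i, hlt, by rw [List.getElem?_eq_getElem hlt, hi]⟩

theorem mem_of_head? {l : List ℕ} {v : ℕ} (h : l.head? = some v) : v ∈ l := by
  cases l with
  | nil => simp at h
  | cons a l => simp at h; simp [h]

theorem mem_of_getLast? {l : List ℕ} {v : ℕ} (h : l.getLast? = some v) : v ∈ l := by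
  rcases eq_or_ne l [] with rfl | hne
  · simp at h
  · have := List.dropLast_append_getLast hne
    have hv : l.getLast hne = v := by
      rw [List.getLast?_eq_getLast hne] at h; exact Option.some_injective _ h
    rw [← this, hv]; simp

theorem concat_getLast? {l : List ℕ} {v : ℕ} (h : l.getLast? = some v) :
    l.dropLast ++ [v] = l := by
  rcases eq_or_ne l [] with rfl | hne
  · simp at h
  · have hv : l.getLast hne = v := by
      rw [List.getLast?_eq_getLast hne] at h; exact Option.some_injective _ h
    rw [← hv]; exact List.dropLast_append_getLast hne

/-! ### seg lemmas -/

theorem seg_head (x y : ℕ) : (seg x y).head? = some x := by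
  unfold seg
  split <;>
  · rw [List.range_succ_eq_map]
    simp

theorem seg_getLast (x y : ℕ) : (seg x y).getLast? = some y := by
  unfold seg
  split
  · rw [List.range_succ, List.map_append, List.getLast?_append]
    simp; omega
  · rw [List.range_succ, List.map_append, List.getLast?_append]
    simp; omega

theorem seg_ne_nil (x y : ℕ) : seg x y ≠ [] := by
  intro h
  have := seg_head x y
  rw [h] at this; simp at this

theorem mem_seg_of_le {x v y : ℕ} (h1 : x ≤ v) (h2 : v ≤ y) : v ∈ seg x y := by
  unfold seg
  rw [if_pos (h1.trans h2)]
  simp only [List.mem_map, List.mem_range]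
  exact ⟨v - x, by omega, by omega⟩

theorem mem_seg_of_ge {x v y : ℕ} (h1 : y ≤ v) (h2 : v ≤ x) : v ∈ seg x y := by
  unfold seg
  split
  · simp only [List.mem_map, List.mem_range]
    exact ⟨v - x, by omega, by omega⟩
  · simp only [List.mem_map, List.mem_range]
    exact ⟨x - v, by omega, by omega⟩

theorem seg_bounds {x v y : ℕ} (h : v ∈ seg x y) : min x y ≤ v ∧ v ≤ max x y := by
  unfold seg at h
  split at h <;>
  · simp only [List.mem_map, List.mem_range] at h
    obtain ⟨k, hk, rfl⟩ := h
    omega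

theorem dropLast_seg_asc {x y : ℕ} (h : x ≤ y) :
    (seg x y).dropLast = (List.range (y - x)).map (fun k => x + k) := by
  unfold seg
  rw [if_pos h, List.range_succ, List.map_append]
  simp

theorem mem_dropLast_seg_lt {x v y : ℕ} (h : x ≤ y) (hv : v ∈ (seg x y).dropLast) : v < y := by
  rw [dropLast_seg_asc h] at hv
  simp only [List.mem_map, List.mem_range] at hv
  obtain ⟨k, hk, rfl⟩ := hv
  omega

theorem seg_self (x : ℕ) : seg x x = [x] := by
  unfold seg; rw [if_pos le_rfl]; rw [show (x - x + 1) = 1 by omega]; rfl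

theorem seg_split_asc {x y z : ℕ} (hxy : x ≤ y) (hyz : y ≤ z) :
    seg x z = (seg x y).dropLast ++ seg y z := by
  rw [dropLast_seg_asc hxy]
  unfold seg
  rw [if_pos (hxy.trans hyz), if_pos hyz]
  have h1 : z - x + 1 = (y - x) + (z - y + 1) := by omega
  rw [h1, List.range_add, List.map_append, List.map_map]
  congr 1
  apply List.map_congr_left
  intro k hk
  simp at hk ⊢
  omega

theorem seg_split_desc {x y z : ℕ} (hxy : y ≤ x) (hzy : z ≤ y) :
    seg x z = (seg x y).dropLast ++ seg y z := by
  rcases eq_or_lt_of_le hxy with rfl | hyx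
  · rw [seg_self]; simp
  rcases eq_or_lt_of_le hzy with rfl | hzy'
  · rw [seg_self, concat_getLast? (seg_getLast x z)]
  have hds : (seg x y).dropLast = (List.range (x - y)).map (fun k => x - k) := by
    unfold seg
    rw [if_neg (by omega), List.range_succ, List.map_append]
    simp
  rw [hds]
  unfold seg
  rw [if_neg (by omega), if_neg (by omega)]
  have h1 : x - z + 1 = (x - y) + (y - z + 1) := by omega
  rw [h1, List.range_add, List.map_append, List.map_map]
  congr 1
  apply List.map_congr_left
  intro k hk
  simp at hk ⊢
  omega

theorem chain'_seg {n x y : ℕ} (h1 : 1 ≤ x) (h2 : x ≤ n) (h3 : 1 ≤ y) (h4 : y ≤ n) :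
    List.Chain' (pathAdj n) (seg x y) := by
  unfold seg
  split <;>
  · rw [List.Chain', List.isChain_map]
    refine (List.isChain_range_succ _ _).2 (fun m hm => ?_)
    unfold pathAdj
    omega


/-! ### cost lemmas -/

theorem cost_nonneg {w : ℕ → ℕ → ℚ} (hw : ∀ a b, 0 < w a b) : ∀ l, 0 ≤ cost w l
  | [] => le_refl 0
  | [_] => le_refl 0
  | a :: b :: rest => by
    have h1 := cost_nonneg hw (b :: rest)
    have h2 := (hw a b).le
    simp only [cost]
    linarith

theorem cost_glue (w : ℕ → ℕ → ℚ) :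
    ∀ (a b : List ℕ), a.getLast? = b.head? → cost w (a.dropLast ++ b) = cost w a + cost w b
  | [], b, h => by
    have : b = [] := by cases b <;> simp_all
    subst this; simp [cost]
  | [x], b, h => by simp [cost]
  | x :: y :: l, b, h => by
    have h' : (y :: l).getLast? = b.head? := by
      rw [← h]; rfl
    cases l with
    | nil =>
      have hb : b.head? = some y := by rw [← h']; rfl
      cases b with
      | nil => simp at hb
      | cons c b' =>
        have hcy : c = y := by simpa using hb
        subst hcy
        simp [cost]
    | cons z l' =>
      have IH := cost_glue w (y :: z :: l') b h'
      have hd : (x :: y :: z :: l').dropLast ++ b = x :: ((y :: z :: l').dropLast ++ b) := by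
        simp
      rw [hd]
      have hd2 : (y :: z :: l').dropLast ++ b = y :: ((z :: l').dropLast ++ b) := by simp
      rw [hd2]
      simp only [cost]
      rw [← hd2, IH]
      simp only [cost]
      ring

theorem chain'_glue {R : ℕ → ℕ → Prop} {a b : List ℕ} (h : a.getLast? = b.head?)
    (ha : List.Chain' R a) (hb : List.Chain' R b) : List.Chain' R (a.dropLast ++ b) := by
  rcases eq_or_ne a [] with rfl | hne
  · simpa using hb
  · have hconcat := List.dropLast_append_getLast hne
    rw [← hconcat] at ha
    rw [List.Chain', List.isChain_append] at ha
    refine List.isChain_append.2 ⟨ha.1, hb, ?_⟩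
    intro u hu v hv
    have hgl : a.getLast hne ∈ b.head? := by
      rw [← h, List.getLast?_eq_getLast hne]; rfl
    have : v = a.getLast hne := by
      rw [List.getLast?_eq_getLast hne] at h
      rw [← h] at hv
      simp at hv
      omega
    subst this
    exact ha.2.2 u hu _ (by simp)

/-! ### Satisfies lemmas -/

theorem sat_append_right {a b : List ℕ} {s t : ℕ} (h : Satisfies b s t) :
    Satisfies (a ++ b) s t := by
  obtain ⟨i, j, hij, hi, hj⟩ := h
  refine ⟨a.length + i, a.length + j, by omega, ?_, ?_⟩
  · rw [List.getElem?_append_right (by omega)]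
    simpa using hi
  · rw [List.getElem?_append_right (by omega)]
    simpa using hj

theorem sat_mem_append {a b : List ℕ} {s t : ℕ} (hs : s ∈ a) (ht : t ∈ b) :
    Satisfies (a ++ b) s t := by
  obtain ⟨i, hilt, hi⟩ := getOfMem hs
  obtain ⟨j, hjlt, hj⟩ := getOfMem ht
  refine ⟨i, a.length + j, by omega, ?_, ?_⟩
  · rw [List.getElem?_append_left hilt]; exact hi
  · rw [List.getElem?_append_right (by omega)]
    simpa using hj

theorem sat_head {b : List ℕ} {s t : ℕ} (h : b.head? = some s) (ht : t ∈ b) :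
    Satisfies b s t := by
  obtain ⟨j, hjlt, hj⟩ := getOfMem ht
  refine ⟨0, j, by omega, ?_, hj⟩
  cases b with
  | nil => simp at h
  | cons c b' =>
    simp at h ⊢
    omega

theorem sat_glue {a b : List ℕ} {s t : ℕ} (h : a.getLast? = b.head?)
    (hs : s ∈ a) (ht : t ∈ b) : Satisfies (a.dropLast ++ b) s t := by
  rcases eq_or_ne a [] with rfl | hne
  · simp at hs
  · have hconcat := List.dropLast_append_getLast hne
    rw [← hconcat] at hs
    rcases List.mem_append.1 hs with hs' | hs'
    · exact sat_mem_append hs' ht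
    · have : s = a.getLast hne := by simpa using hs'
      subst this
      have hb : b.head? = some (a.getLast hne) := by
        rw [← h, List.getLast?_eq_getLast hne]
      exact sat_append_right (sat_head hb ht)

theorem not_sat_split {A B : List ℕ} {s t : ℕ} (hs : s ∉ A) (ht : t ∉ B) :
    ¬ Satisfies (A ++ B) s t := by
  rintro ⟨i, j, hij, hi, hj⟩
  have hiA : A.length ≤ i := by
    by_contra hlt
    push_neg at hlt
    rw [List.getElem?_append_left hlt] at hi
    exact hs (memOfGet hi)
  rw [List.getElem?_append_right (by omega)] at hj
  exact ht (memOfGet hj)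


/-! ### rideThrough lemmas -/

theorem rideThrough_head (x : ℕ) (l : List ℕ) : (rideThrough (x :: l)).head? = some x := by
  cases l with
  | nil => rfl
  | cons y l' =>
    show (seg x y ++ _).head? = some x
    rw [List.head?_append_of_ne_nil _ (seg_ne_nil x y)]
    exact seg_head x y

theorem rideThrough_ne_nil (x : ℕ) (l : List ℕ) : rideThrough (x :: l) ≠ [] := by
  intro h
  have := rideThrough_head x l
  rw [h] at this; simp at this

theorem rideThrough_cons (x y : ℕ) (l : List ℕ) :
    rideThrough (x :: y :: l) = (seg x y).dropLast ++ rideThrough (y :: l) := by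
  show seg x y ++ (rideThrough (y :: l)).tail = _
  have hh := rideThrough_head y l
  cases hr : rideThrough (y :: l) with
  | nil => exact absurd hr (rideThrough_ne_nil y l)
  | cons a r =>
    rw [hr] at hh
    have ha : a = y := by simpa using hh
    rw [ha]
    conv_lhs => rw [← concat_getLast? (seg_getLast x y)]
    simp

theorem rideThrough_pair (x y : ℕ) : rideThrough [x, y] = seg x y := by
  show seg x y ++ ([y].tail) = seg x y
  simp

theorem mem_rideThrough {v x y : ℕ} (l : List ℕ) (h : v ∈ seg x y) :
    v ∈ rideThrough (x :: y :: l) := by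
  rw [rideThrough_cons]
  rw [← concat_getLast? (seg_getLast x y)] at h
  rcases List.mem_append.1 h with h' | h'
  · exact List.mem_append_left _ h'
  · have hvy : v = y := by simpa using h'
    rw [hvy]
    exact List.mem_append_right _ (mem_of_head? (rideThrough_head y l))

theorem mem_rideThrough_lift {v x y : ℕ} {l : List ℕ} (h : v ∈ rideThrough (y :: l)) :
    v ∈ rideThrough (x :: y :: l) := by
  rw [rideThrough_cons]
  exact List.mem_append_right _ h

theorem sat_lift {s t x y : ℕ} {l : List ℕ} (h : Satisfies (rideThrough (y :: l)) s t) :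
    Satisfies (rideThrough (x :: y :: l)) s t := by
  rw [rideThrough_cons]
  exact sat_append_right h

theorem cost_rideThrough_cons (w : ℕ → ℕ → ℚ) (x y : ℕ) (l : List ℕ) :
    cost w (rideThrough (x :: y :: l)) = cost w (seg x y) + cost w (rideThrough (y :: l)) := by
  rw [rideThrough_cons]
  exact cost_glue w _ _ (by rw [seg_getLast, rideThrough_head])

theorem rideThrough_getLast : ∀ (l : List ℕ) (x : ℕ),
    (rideThrough (l ++ [x])).getLast? = some x
  | [], x => rfl
  | [a], x => by
    show (rideThrough [a, x]).getLast? = some x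
    rw [rideThrough_pair]; exact seg_getLast a x
  | a :: b :: l, x => by
    show (rideThrough (a :: b :: (l ++ [x]))).getLast? = some x
    rw [rideThrough_cons, List.getLast?_append]
    have hrec := rideThrough_getLast (b :: l) x
    rw [List.cons_append] at hrec
    rw [hrec]
    rfl

theorem chain'_rideThrough {n : ℕ} : ∀ (l : List ℕ),
    (∀ v ∈ l, 1 ≤ v ∧ v ≤ n) → List.Chain' (pathAdj n) (rideThrough l)
  | [], _ => List.isChain_nil
  | [x], _ => List.isChain_singleton x
  | x :: y :: l, h => by
    rw [rideThrough_cons]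
    refine chain'_glue (by rw [seg_getLast, rideThrough_head]) ?_ ?_
    · have hx := h x (by simp)
      have hy := h y (by simp)
      exact chain'_seg hx.1 hx.2 hy.1 hy.2
    · exact chain'_rideThrough (y :: l) (fun v hv => h v (by simp at hv ⊢; tauto))

theorem bounds_of_chain' {n : ℕ} : ∀ {l : List ℕ}, List.Chain' (pathAdj n) l →
    2 ≤ l.length → ∀ v ∈ l, 1 ≤ v ∧ v ≤ n
  | a :: b :: l, h, _, v, hv => by
    rw [List.Chain', List.isChain_cons_cons] at h
    rcases List.mem_cons.1 hv with rfl | hv'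
    · rcases h.1 with ⟨_, h1, h2, _, _⟩; exact ⟨h1, h2⟩
    · cases l with
      | nil =>
        have : v = b := by simpa using hv'
        subst this
        rcases h.1 with ⟨_, _, _, h3, h4⟩; exact ⟨h3, h4⟩
      | cons c l' =>
        exact bounds_of_chain' h.2 (by simp) v hv'

theorem cost_seg_split_asc (w : ℕ → ℕ → ℚ) {x y z : ℕ} (hxy : x ≤ y) (hyz : y ≤ z) :
    cost w (seg x z) = cost w (seg x y) + cost w (seg y z) := by
  rw [seg_split_asc hxy hyz]
  exact cost_glue w _ _ (by rw [seg_getLast, seg_head])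

theorem cost_seg_split_desc (w : ℕ → ℕ → ℚ) {x y z : ℕ} (hxy : y ≤ x) (hzy : z ≤ y) :
    cost w (seg x z) = cost w (seg x y) + cost w (seg y z) := by
  rw [seg_split_desc hxy hzy]
  exact cost_glue w _ _ (by rw [seg_getLast, seg_head])

theorem cost_two {w : ℕ → ℕ → ℚ} (hw : ∀ a b, 0 < w a b) (L : ℕ) {s0 M' M : ℕ}
    (h1 : s0 ≤ M') (h2 : M' ≤ M) :
    cost w (seg s0 M') + cost w (seg M' L) ≤ cost w (seg s0 M) + cost w (seg M L) := by
  rcases le_or_gt L M' with hLM' | hM'L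
  · rw [cost_seg_split_desc w h2 hLM', cost_seg_split_asc w h1 h2]
    have := cost_nonneg hw (seg M' M)
    have := cost_nonneg hw (seg M M')
    linarith
  · rcases le_or_gt L M with hLM | hML
    · rw [cost_seg_split_asc w h1 h2, cost_seg_split_asc w (le_of_lt hM'L) hLM]
      have := cost_nonneg hw (seg L M)
      have := cost_nonneg hw (seg M L)
      linarith
    · rw [cost_seg_split_asc w h2 (le_of_lt hML), cost_seg_split_asc w h1 h2]
      linarith


/-- if the `(M,m)`-canonical ride with `m ≤ M` is optimal, then
`Ẑ_m` is nonempty and the `(M̂_m, m)`-canonical ride with `M̂_m = min Ẑ_m` is optimal. -/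
theorem canonical_m_le_M (n : ℕ) (w : ℕ → ℕ → ℚ)
    (hwpos : ∀ a b, 0 < w a b) (hwsym : ∀ a b, w a b = w b a)
    (s0 t0 : ℕ) (C : Finset (ℕ × ℕ)) (L Rt : ℕ)
    (hL : IsLeast {v | v ∈ VC C} L) (hR : IsGreatest {v | v ∈ VC C} Rt)
    (M m : ℕ) (hM : M ∈ VC C ∪ {s0, t0}) (hm : m ∈ VC C ∪ {s0, t0})
    (hs0M : s0 ≤ M) (hmt0 : m ≤ t0) (hmM : m ≤ M)
    (hcan : ∃ π, IsCanonical ⟨pathAdj n, w, s0, t0, C⟩ L Rt M m π ∧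
      Optimal ⟨pathAdj n, w, s0, t0, C⟩ π) :
    ∃ hZ : ((insert s0 (insert t0 (VC C))).filter
        (fun z => m ≤ z ∧ s0 ≤ z ∧ ¬∃ r ∈ C, r.2 < m ∧ z < r.1)).Nonempty,
      ∀ π, IsCanonical ⟨pathAdj n, w, s0, t0, C⟩ L Rt
          (((insert s0 (insert t0 (VC C))).filter
            (fun z => m ≤ z ∧ s0 ≤ z ∧ ¬∃ r ∈ C, r.2 < m ∧ z < r.1)).min' hZ) m π →
        Optimal ⟨pathAdj n, w, s0, t0, C⟩ π := by
  classical
  obtain ⟨π, hcanπ, hopt⟩ := hcan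
  have hLRt : L ≤ Rt := hL.2 hR.1
  have hπ : π = rideThrough [s0, M, L, Rt, m, t0] := by
    simp only [IsCanonical] at hcanπ
    rw [if_pos hmM] at hcanπ
    exact hcanπ
  obtain ⟨⟨hne, hchain⟩, hhead, hlast, hsat⟩ := hopt.1
  have hVCs : ∀ r ∈ C, L ≤ r.1 ∧ r.1 ≤ Rt ∧ L ≤ r.2 ∧ r.2 ≤ Rt := by
    intro r hr
    have h1 : r.1 ∈ VC C := Finset.mem_union_left _ (Finset.mem_image.2 ⟨r, hr, rfl⟩)
    have h2 : r.2 ∈ VC C := Finset.mem_union_right _ (Finset.mem_image.2 ⟨r, hr, rfl⟩)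
    exact ⟨hL.2 h1, hR.2 h1, hL.2 h2, hR.2 h2⟩
  have hMZ : M ∈ (insert s0 (insert t0 (VC C))).filter
      (fun z => m ≤ z ∧ s0 ≤ z ∧ ¬∃ r ∈ C, r.2 < m ∧ z < r.1) := by
    rw [Finset.mem_filter]
    constructor
    · simp only [Finset.mem_insert]
      rcases Finset.mem_union.1 hM with h | h
      · tauto
      · simp only [Finset.mem_insert, Finset.mem_singleton] at h; tauto
    · refine ⟨hmM, hs0M, ?_⟩
      rintro ⟨⟨s, t⟩, hrC, htm0, hMs0⟩
      have htm : t < m := htm0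
      have hMs : M < s := hMs0
      obtain ⟨hLs, hsR, hLt, htR⟩ := hVCs (s, t) hrC
      have hsat' := hsat (s, t) hrC
      have hsat'' : Satisfies π s t := hsat'
      have hsplit : seg L Rt = (seg L s).dropLast ++ seg s Rt := seg_split_asc hLs hsR
      have hABeq : π = ((seg s0 M).dropLast ++ ((seg M L).dropLast ++ (seg L s).dropLast)) ++
          ((seg s Rt).dropLast ++ ((seg Rt m).dropLast ++ seg m t0)) := by
        rw [hπ, rideThrough_cons s0 M, rideThrough_cons M L, rideThrough_cons L Rt,
          rideThrough_cons Rt m, rideThrough_pair m t0, hsplit,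
          List.dropLast_append_of_ne_nil (seg_ne_nil s Rt)]
        simp [List.append_assoc]
      rw [hABeq] at hsat''
      refine not_sat_split ?_ ?_ hsat''
      · intro hmem
        simp only [List.mem_append] at hmem
        rcases hmem with h' | h' | h'
        · have := seg_bounds (List.dropLast_subset _ h'); omega
        · have := seg_bounds (List.dropLast_subset _ h'); omega
        · have := mem_dropLast_seg_lt hLs h'; omega
      · intro hmem
        simp only [List.mem_append] at hmem
        rcases hmem with h' | h' | h'
        · have := seg_bounds (List.dropLast_subset _ h'); omega
        · have := seg_bounds (List.dropLast_subset _ h'); omega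
        · have := seg_bounds h'; omega
  have hZne : ((insert s0 (insert t0 (VC C))).filter
      (fun z => m ≤ z ∧ s0 ≤ z ∧ ¬∃ r ∈ C, r.2 < m ∧ z < r.1)).Nonempty := ⟨M, hMZ⟩
  refine ⟨hZne, ?_⟩
  set M' := ((insert s0 (insert t0 (VC C))).filter
      (fun z => m ≤ z ∧ s0 ≤ z ∧ ¬∃ r ∈ C, r.2 < m ∧ z < r.1)).min' hZne with hM'def
  have hM'mem := Finset.min'_mem _ hZne
  rw [Finset.mem_filter] at hM'mem
  obtain ⟨hM'ins, hmM', hs0M', hM'prop⟩ := hM'mem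
  have hM'M : M' ≤ M := Finset.min'_le _ _ hMZ
  intro π' hcan'
  have hπ' : π' = rideThrough [s0, M', L, Rt, m, t0] := by
    simp only [IsCanonical] at hcan'
    rw [if_pos hmM'] at hcan'
    exact hcan'
  by_cases heq : M' = M
  · rw [heq, ← hπ] at hπ'
    rw [hπ']
    exact hopt
  have hM'ltM : M' < M := lt_of_le_of_ne hM'M heq
  have hs0mem : s0 ∈ π := mem_of_head? hhead
  have hMmem : M ∈ π := by
    rw [hπ]; exact mem_rideThrough _ (mem_seg_of_le hs0M le_rfl)
  have h2len : 2 ≤ π.length := by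
    rcases π with _ | ⟨a, _ | ⟨b, l⟩⟩
    · simp at hs0mem
    · simp only [List.mem_singleton] at hs0mem hMmem; omega
    · simp only [List.length_cons]; omega
  have hbnd := bounds_of_chain' hchain h2len
  have hb_s0 := hbnd s0 hs0mem
  have hb_M := hbnd M hMmem
  have hb_L := hbnd L (by
    rw [hπ]
    exact mem_rideThrough_lift (mem_rideThrough _ (mem_of_getLast? (seg_getLast M L))))
  have hb_Rt := hbnd Rt (by
    rw [hπ]
    exact mem_rideThrough_lift (mem_rideThrough_lift
      (mem_rideThrough _ (mem_of_getLast? (seg_getLast L Rt)))))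
  have hb_m := hbnd m (by
    rw [hπ]
    exact mem_rideThrough_lift (mem_rideThrough_lift (mem_rideThrough_lift
      (mem_rideThrough _ (mem_of_getLast? (seg_getLast Rt m))))))
  have hb_t0 := hbnd t0 (by
    rw [hπ]
    exact mem_rideThrough_lift (mem_rideThrough_lift (mem_rideThrough_lift
      (mem_rideThrough_lift (mem_rideThrough _ (mem_of_getLast? (seg_getLast m t0)))))))
  have hfeas' : Feasible ⟨pathAdj n, w, s0, t0, C⟩ π' := by
    refine ⟨⟨?_, ?_⟩, ?_, ?_, ?_⟩
    · rw [hπ']; exact rideThrough_ne_nil _ _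
    · rw [hπ']
      apply chain'_rideThrough
      intro v hv
      simp only [List.mem_cons, List.not_mem_nil, or_false] at hv
      rcases hv with rfl | rfl | rfl | rfl | rfl | rfl <;> omega
    · rw [hπ']; exact rideThrough_head _ _
    · rw [hπ']
      exact rideThrough_getLast [s0, M', L, Rt, m] t0
    · rintro ⟨s, t⟩ hrC
      obtain ⟨hLs, hsR, hLt, htR⟩ := hVCs (s, t) hrC
      show Satisfies π' s t
      rw [hπ']
      rcases le_or_gt m t with hmt | htm
      · apply sat_lift; apply sat_lift
        rw [rideThrough_cons]
        exact sat_glue (by rw [seg_getLast, rideThrough_head]) (mem_seg_of_le hLs hsR)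
          (mem_rideThrough _ (mem_seg_of_ge hmt htR))
      · have hsM' : s ≤ M' := by
          by_contra hgt
          push_neg at hgt
          exact hM'prop ⟨(s, t), hrC, htm, hgt⟩
        apply sat_lift
        rw [rideThrough_cons]
        exact sat_glue (by rw [seg_getLast, rideThrough_head]) (mem_seg_of_ge hLs hsM')
          (mem_rideThrough _ (mem_seg_of_le hLt htR))
  have e1 : ∀ X : ℕ, cost w (rideThrough [s0, X, L, Rt, m, t0]) =
      cost w (seg s0 X) + cost w (seg X L) +
        (cost w (seg L Rt) + cost w (seg Rt m) + cost w (seg m t0)) := by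
    intro X
    rw [cost_rideThrough_cons, cost_rideThrough_cons, cost_rideThrough_cons,
      cost_rideThrough_cons, rideThrough_pair]
    ring
  have hcost : cost w π' ≤ cost w π := by
    rw [hπ, hπ', e1, e1]
    have := cost_two hwpos L hs0M' hM'M
    linarith
  exact ⟨hfeas', fun π'' h'' => le_trans hcost (hopt.2 π'' h'')⟩


end RideSharing
end

section
/- For any node m with m ≤ t₀ in a path scenario R, let Q_m = {(s',t') ∈ C : t' < m < s'} and define u_m = max{m, s₀} if Q_m = ∅, and u_m = max{s₀, max_{(s',t') ∈ Q_m} s'} otherwise. Then u_m equals min Ẑ_m, where Ẑ_m = {z ∈ {s₀,t₀} ∪ V_C : m ≤ z, s₀ ≤ z, and no (s,t) ∈ C has t < m and z < s}, provided that this minimum is considered over the set Ẑ_m (assumed nonempty). -/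
namespace RideSharing

set_option maxHeartbeats 1000000 in
/-- `u_m`, defined from `Q_m = {(s',t') ∈ C : t' < m < s'}`,
equals `min Ẑ_m`. -/
theorem min_Zhat_eq (s0 t0 : ℕ) (C : Finset (ℕ × ℕ)) (m : ℕ)
    (hm : m ∈ VC C ∪ {s0, t0}) (hmt0 : m ≤ t0) :
    ∀ hZ : ((insert s0 (insert t0 (VC C))).filter
        (fun z => m ≤ z ∧ s0 ≤ z ∧ ¬∃ r ∈ C, r.2 < m ∧ z < r.1)).Nonempty,
      (C.filter (fun r => r.2 < m ∧ m < r.1) = ∅ →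
        ((insert s0 (insert t0 (VC C))).filter
          (fun z => m ≤ z ∧ s0 ≤ z ∧ ¬∃ r ∈ C, r.2 < m ∧ z < r.1)).min' hZ
          = max m s0) ∧
      (∀ hQ : (C.filter (fun r => r.2 < m ∧ m < r.1)).Nonempty,
        ((insert s0 (insert t0 (VC C))).filter
          (fun z => m ≤ z ∧ s0 ≤ z ∧ ¬∃ r ∈ C, r.2 < m ∧ z < r.1)).min' hZ
          = max s0 (((C.filter (fun r => r.2 < m ∧ m < r.1)).image Prod.fst).max'
              (hQ.image Prod.fst))) := by
  intro hZ
  classical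
  constructor
  · intro hQ
    apply le_antisymm
    · apply Finset.min'_le
      simp only [Finset.mem_filter, Finset.mem_insert]
      refine ⟨?_, le_max_left _ _, le_max_right _ _, ?_⟩
      · rcases le_total m s0 with h | h
        · left; exact (max_eq_right h).symm ▸ rfl
        · rw [max_eq_left h]
          simp only [Finset.mem_union, Finset.mem_insert, Finset.mem_singleton] at hm
          tauto
      · rintro ⟨r, hr, h1, h2⟩
        have : r ∈ C.filter (fun r => r.2 < m ∧ m < r.1) := by
          simp only [Finset.mem_filter]
          exact ⟨hr, h1, lt_of_le_of_lt (le_max_left m s0) h2⟩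
        rw [hQ] at this
        exact absurd this (Finset.notMem_empty r)
    · apply Finset.le_min'
      intro z hz
      simp only [Finset.mem_filter] at hz
      exact max_le hz.2.1 hz.2.2.1
  · intro hQ
    set Q := C.filter (fun r => r.2 < m ∧ m < r.1) with hQdef
    set M := (Q.image Prod.fst).max' (hQ.image Prod.fst) with hMdef
    obtain ⟨x, hxQ, hxM⟩ := Finset.mem_image.mp (Finset.max'_mem _ (hQ.image Prod.fst))
    simp only [hQdef, Finset.mem_filter] at hxQ
    obtain ⟨hxC, hx2, hx1⟩ := hxQ
    have hmM : m < M := by rw [← hMdef] at hxM; omega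
    apply le_antisymm
    · apply Finset.min'_le
      simp only [Finset.mem_filter, Finset.mem_insert]
      refine ⟨?_, le_of_lt (lt_of_lt_of_le hmM (le_max_right _ _)), le_max_left _ _, ?_⟩
      · rcases le_total M s0 with h | h
        · left; exact (max_eq_left h).symm ▸ rfl
        · rw [max_eq_right h]
          right; right
          simp only [VC, Finset.mem_union, Finset.mem_image]
          exact Or.inl ⟨x, hxC, hxM⟩
      · rintro ⟨r, hr, h1, h2⟩
        have hMr : M < r.1 := lt_of_le_of_lt (le_max_right s0 M) h2
        have hrQ : r ∈ Q := by
          simp only [hQdef, Finset.mem_filter]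
          exact ⟨hr, h1, lt_trans hmM hMr⟩
        have : r.1 ≤ M := Finset.le_max' _ _ (Finset.mem_image_of_mem Prod.fst hrQ)
        omega
    · apply Finset.le_min'
      intro z hz
      simp only [Finset.mem_filter] at hz
      obtain ⟨_, hmz, hs0z, hnone⟩ := hz
      refine max_le hs0z (Finset.max'_le _ _ _ ?_)
      intro y hy
      obtain ⟨r, hrQ, hry⟩ := Finset.mem_image.mp hy
      simp only [hQdef, Finset.mem_filter] at hrQ
      by_contra hlt
      exact hnone ⟨r, hrQ.1, hrQ.2.1, by omega⟩

end RideSharing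
end

section
/- Let Ĉ be a set of right-to-left requests on the path {1,…,n} and let C* = {(s*₁,t*₁),…,(s*_h,t*_h)} be the output of Normalize on Ĉ. Define, for v a node, T¹_v(D) = {(s,t) ∈ D : t = v < s}, T²_v(D) = {(s,t) ∈ D : t < v < s}, T³_v(D) = {(s,t) ∈ D : t < v = s}, L(D) = {v : T¹_v(D) ≠ ∅ and T²_v(D) = T³_v(D) = ∅}, R(D) = {v : T¹_v(D) = T²_v(D) = ∅ and T³_v(D) ≠ ∅}. Then L(Ĉ) = {t*₁,…,t*_h} and R(Ĉ) = {s*₁,…,s*_h}. -/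
namespace RideSharing

/-- One merge step of `Normalize`: two distinct right-to-left requests with
`t' ≤ t ≤ s' ≤ s` are replaced by `(s,t')`. -/
def MergeStep (D D' : Finset (ℕ × ℕ)) : Prop :=
  ∃ s t s' t', (s, t) ∈ D ∧ (s', t') ∈ D ∧ (s, t) ≠ (s', t') ∧
    t < s ∧ t' < s' ∧ t' ≤ t ∧ t ≤ s' ∧ s' ≤ s ∧
    D' = insert (s, t') ((D.erase (s, t)).erase (s', t'))

/-- One drop step of `Normalize`: a request `(s,t)` dominated by a distinct
`(s',t')` with `t' ≤ t < s ≤ s'` is removed. -/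
def DropStep (D D' : Finset (ℕ × ℕ)) : Prop :=
  ∃ s t s' t', (s, t) ∈ D ∧ (s', t') ∈ D ∧ (s, t) ≠ (s', t') ∧
    t' ≤ t ∧ t < s ∧ s ≤ s' ∧
    D' = D.erase (s, t)

/-- `Cstar` is an output of `Normalize` on `D`: merge steps are applied until none
applies, then drop steps are applied until none applies. -/
def NormalizeOutput (D Cstar : Finset (ℕ × ℕ)) : Prop :=
  ∃ D1, Relation.ReflTransGen MergeStep D D1 ∧ (∀ D', ¬ MergeStep D1 D') ∧
    Relation.ReflTransGen DropStep D1 Cstar ∧ (∀ D', ¬ DropStep Cstar D')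

/-- `L(D)`: nodes `v` with `T¹_v(D) ≠ ∅` and `T²_v(D) = T³_v(D) = ∅`. -/
def Lset (D : Finset (ℕ × ℕ)) : Set ℕ :=
  {v | (∃ r ∈ D, r.2 = v ∧ v < r.1) ∧ (¬∃ r ∈ D, r.2 < v ∧ v < r.1) ∧
    ¬∃ r ∈ D, r.2 < v ∧ v = r.1}

/-- `R(D)`: nodes `v` with `T¹_v(D) = T²_v(D) = ∅` and `T³_v(D) ≠ ∅`. -/
def Rset (D : Finset (ℕ × ℕ)) : Set ℕ :=
  {v | (¬∃ r ∈ D, r.2 = v ∧ v < r.1) ∧ (¬∃ r ∈ D, r.2 < v ∧ v < r.1) ∧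
    ∃ r ∈ D, r.2 < v ∧ v = r.1}

lemma merge_inv {D D' : Finset (ℕ × ℕ)} (h : MergeStep D D') :
    Lset D = Lset D' ∧ Rset D = Rset D' := by
  obtain ⟨s, t, s', t', hst, hst', hne, h1, h2, h3, h4, h5, rfl⟩ := h
  have hmem : ∀ r : ℕ × ℕ,
      r ∈ insert (s, t') ((D.erase (s, t)).erase (s', t')) ↔
      r = (s, t') ∨ (r ∈ D ∧ r ≠ (s, t) ∧ r ≠ (s', t')) := by
    intro r
    simp only [Finset.mem_insert, Finset.mem_erase]
    tauto
  constructor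
  · ext v
    simp only [Lset, Set.mem_setOf_eq]
    constructor
    · rintro ⟨hA, hB, hC⟩
      have e1 : ¬(t < v ∧ v < s) := fun hx => hB ⟨(s,t), hst, hx.1, hx.2⟩
      have e2 : ¬(t' < v ∧ v < s') := fun hx => hB ⟨(s',t'), hst', hx.1, hx.2⟩
      have e3 : ¬(t < v ∧ v = s) := fun hx => hC ⟨(s,t), hst, hx.1, hx.2⟩
      have e4 : ¬(t' < v ∧ v = s') := fun hx => hC ⟨(s',t'), hst', hx.1, hx.2⟩
      refine ⟨?_, ?_, ?_⟩
      · obtain ⟨⟨a, b⟩, hr, hp1, hp2⟩ := hA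
        dsimp only at hp1 hp2
        by_cases hx : (a, b) = (s, t)
        · rw [Prod.mk.injEq] at hx
          have hvt : t' = v := by omega
          exact ⟨(s, t'), (hmem _).mpr (Or.inl rfl), hvt, by omega⟩
        · by_cases hy : (a, b) = (s', t')
          · rw [Prod.mk.injEq] at hy
            exact ⟨(s, t'), (hmem _).mpr (Or.inl rfl), by omega, by omega⟩
          · exact ⟨(a, b), (hmem _).mpr (Or.inr ⟨hr, hx, hy⟩), hp1, hp2⟩
      · rintro ⟨⟨a, b⟩, hr, hp1, hp2⟩
        dsimp only at hp1 hp2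
        rcases (hmem _).mp hr with hx | ⟨hr', _, _⟩
        · rw [Prod.mk.injEq] at hx
          omega
        · exact hB ⟨(a, b), hr', hp1, hp2⟩
      · rintro ⟨⟨a, b⟩, hr, hp1, hp2⟩
        dsimp only at hp1 hp2
        rcases (hmem _).mp hr with hx | ⟨hr', _, _⟩
        · rw [Prod.mk.injEq] at hx
          omega
        · exact hC ⟨(a, b), hr', hp1, hp2⟩
    · rintro ⟨hA, hB, hC⟩
      have E1 : ¬(t' < v ∧ v < s) := fun hx =>
        hB ⟨(s,t'), (hmem _).mpr (Or.inl rfl), hx.1, hx.2⟩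
      have E2 : ¬(t' < v ∧ v = s) := fun hx =>
        hC ⟨(s,t'), (hmem _).mpr (Or.inl rfl), hx.1, hx.2⟩
      refine ⟨?_, ?_, ?_⟩
      · obtain ⟨⟨a, b⟩, hr, hp1, hp2⟩ := hA
        dsimp only at hp1 hp2
        rcases (hmem _).mp hr with hx | ⟨hr', _, _⟩
        · rw [Prod.mk.injEq] at hx
          exact ⟨(s', t'), hst', by omega, by omega⟩
        · exact ⟨(a, b), hr', hp1, hp2⟩
      · rintro ⟨⟨a, b⟩, hr, hp1, hp2⟩
        dsimp only at hp1 hp2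
        by_cases hx : (a, b) = (s, t)
        · rw [Prod.mk.injEq] at hx; omega
        · by_cases hy : (a, b) = (s', t')
          · rw [Prod.mk.injEq] at hy; omega
          · exact hB ⟨(a, b), (hmem _).mpr (Or.inr ⟨hr, hx, hy⟩), hp1, hp2⟩
      · rintro ⟨⟨a, b⟩, hr, hp1, hp2⟩
        dsimp only at hp1 hp2
        by_cases hx : (a, b) = (s, t)
        · rw [Prod.mk.injEq] at hx; omega
        · by_cases hy : (a, b) = (s', t')
          · rw [Prod.mk.injEq] at hy; omega
          · exact hC ⟨(a, b), (hmem _).mpr (Or.inr ⟨hr, hx, hy⟩), hp1, hp2⟩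
  · ext v
    simp only [Rset, Set.mem_setOf_eq]
    constructor
    · rintro ⟨hA, hB, hC⟩
      have f1 : ¬(t = v ∧ v < s) := fun hx => hA ⟨(s,t), hst, hx.1, hx.2⟩
      have f2 : ¬(t' = v ∧ v < s') := fun hx => hA ⟨(s',t'), hst', hx.1, hx.2⟩
      have f3 : ¬(t < v ∧ v < s) := fun hx => hB ⟨(s,t), hst, hx.1, hx.2⟩
      have f4 : ¬(t' < v ∧ v < s') := fun hx => hB ⟨(s',t'), hst', hx.1, hx.2⟩
      refine ⟨?_, ?_, ?_⟩
      · rintro ⟨⟨a, b⟩, hr, hp1, hp2⟩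
        dsimp only at hp1 hp2
        rcases (hmem _).mp hr with hx | ⟨hr', _, _⟩
        · rw [Prod.mk.injEq] at hx; omega
        · exact hA ⟨(a, b), hr', hp1, hp2⟩
      · rintro ⟨⟨a, b⟩, hr, hp1, hp2⟩
        dsimp only at hp1 hp2
        rcases (hmem _).mp hr with hx | ⟨hr', _, _⟩
        · rw [Prod.mk.injEq] at hx; omega
        · exact hB ⟨(a, b), hr', hp1, hp2⟩
      · obtain ⟨⟨a, b⟩, hr, hp1, hp2⟩ := hC
        dsimp only at hp1 hp2
        by_cases hx : (a, b) = (s, t)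
        · rw [Prod.mk.injEq] at hx
          exact ⟨(s, t'), (hmem _).mpr (Or.inl rfl), by omega, by omega⟩
        · by_cases hy : (a, b) = (s', t')
          · rw [Prod.mk.injEq] at hy
            have hss : s' = s := by omega
            exact ⟨(s, t'), (hmem _).mpr (Or.inl rfl), by omega, by omega⟩
          · exact ⟨(a, b), (hmem _).mpr (Or.inr ⟨hr, hx, hy⟩), hp1, hp2⟩
    · rintro ⟨hA, hB, hC⟩
      have F1 : ¬(t' = v ∧ v < s) := fun hx =>
        hA ⟨(s,t'), (hmem _).mpr (Or.inl rfl), hx.1, hx.2⟩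
      have F2 : ¬(t' < v ∧ v < s) := fun hx =>
        hB ⟨(s,t'), (hmem _).mpr (Or.inl rfl), hx.1, hx.2⟩
      refine ⟨?_, ?_, ?_⟩
      · rintro ⟨⟨a, b⟩, hr, hp1, hp2⟩
        dsimp only at hp1 hp2
        by_cases hx : (a, b) = (s, t)
        · rw [Prod.mk.injEq] at hx; omega
        · by_cases hy : (a, b) = (s', t')
          · rw [Prod.mk.injEq] at hy; omega
          · exact hA ⟨(a, b), (hmem _).mpr (Or.inr ⟨hr, hx, hy⟩), hp1, hp2⟩
      · rintro ⟨⟨a, b⟩, hr, hp1, hp2⟩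
        dsimp only at hp1 hp2
        by_cases hx : (a, b) = (s, t)
        · rw [Prod.mk.injEq] at hx; omega
        · by_cases hy : (a, b) = (s', t')
          · rw [Prod.mk.injEq] at hy; omega
          · exact hB ⟨(a, b), (hmem _).mpr (Or.inr ⟨hr, hx, hy⟩), hp1, hp2⟩
      · obtain ⟨⟨a, b⟩, hr, hp1, hp2⟩ := hC
        dsimp only at hp1 hp2
        rcases (hmem _).mp hr with hx | ⟨hr', _, _⟩
        · rw [Prod.mk.injEq] at hx
          exact ⟨(s, t), hst, by omega, by omega⟩
        · exact ⟨(a, b), hr', hp1, hp2⟩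

lemma drop_inv {D D' : Finset (ℕ × ℕ)} (h : DropStep D D') :
    Lset D = Lset D' ∧ Rset D = Rset D' := by
  obtain ⟨s, t, s', t', hst, hst', hne, h3, h1, h5, rfl⟩ := h
  have hmem : ∀ r : ℕ × ℕ, r ∈ D.erase (s, t) ↔ r ∈ D ∧ r ≠ (s, t) := by
    intro r; simp only [Finset.mem_erase]; tauto
  have hst'' : (s', t') ∈ D.erase (s, t) :=
    (hmem _).mpr ⟨hst', fun hx => hne hx.symm⟩
  constructor
  · ext v
    simp only [Lset, Set.mem_setOf_eq]
    constructor
    · rintro ⟨hA, hB, hC⟩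
      have e2 : ¬(t' < v ∧ v < s') := fun hx => hB ⟨(s',t'), hst', hx.1, hx.2⟩
      refine ⟨?_, ?_, ?_⟩
      · obtain ⟨⟨a, b⟩, hr, hp1, hp2⟩ := hA
        dsimp only at hp1 hp2
        by_cases hx : (a, b) = (s, t)
        · rw [Prod.mk.injEq] at hx
          exact ⟨(s', t'), hst'', by omega, by omega⟩
        · exact ⟨(a, b), (hmem _).mpr ⟨hr, hx⟩, hp1, hp2⟩
      · rintro ⟨r, hr, hp⟩
        exact hB ⟨r, ((hmem _).mp hr).1, hp⟩
      · rintro ⟨r, hr, hp⟩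
        exact hC ⟨r, ((hmem _).mp hr).1, hp⟩
    · rintro ⟨hA, hB, hC⟩
      have E1 : ¬(t' < v ∧ v < s') := fun hx => hB ⟨(s',t'), hst'', hx.1, hx.2⟩
      have E2 : ¬(t' < v ∧ v = s') := fun hx => hC ⟨(s',t'), hst'', hx.1, hx.2⟩
      refine ⟨?_, ?_, ?_⟩
      · obtain ⟨r, hr, hp⟩ := hA
        exact ⟨r, ((hmem _).mp hr).1, hp⟩
      · rintro ⟨⟨a, b⟩, hr, hp1, hp2⟩
        dsimp only at hp1 hp2
        by_cases hx : (a, b) = (s, t)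
        · rw [Prod.mk.injEq] at hx; omega
        · exact hB ⟨(a, b), (hmem _).mpr ⟨hr, hx⟩, hp1, hp2⟩
      · rintro ⟨⟨a, b⟩, hr, hp1, hp2⟩
        dsimp only at hp1 hp2
        by_cases hx : (a, b) = (s, t)
        · rw [Prod.mk.injEq] at hx; omega
        · exact hC ⟨(a, b), (hmem _).mpr ⟨hr, hx⟩, hp1, hp2⟩
  · ext v
    simp only [Rset, Set.mem_setOf_eq]
    constructor
    · rintro ⟨hA, hB, hC⟩
      have f2 : ¬(t' = v ∧ v < s') := fun hx => hA ⟨(s',t'), hst', hx.1, hx.2⟩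
      have f4 : ¬(t' < v ∧ v < s') := fun hx => hB ⟨(s',t'), hst', hx.1, hx.2⟩
      refine ⟨?_, ?_, ?_⟩
      · rintro ⟨r, hr, hp⟩
        exact hA ⟨r, ((hmem _).mp hr).1, hp⟩
      · rintro ⟨r, hr, hp⟩
        exact hB ⟨r, ((hmem _).mp hr).1, hp⟩
      · obtain ⟨⟨a, b⟩, hr, hp1, hp2⟩ := hC
        dsimp only at hp1 hp2
        by_cases hx : (a, b) = (s, t)
        · rw [Prod.mk.injEq] at hx
          exact ⟨(s', t'), hst'', by omega, by omega⟩
        · exact ⟨(a, b), (hmem _).mpr ⟨hr, hx⟩, hp1, hp2⟩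
    · rintro ⟨hA, hB, hC⟩
      have F1 : ¬(t' = v ∧ v < s') := fun hx => hA ⟨(s',t'), hst'', hx.1, hx.2⟩
      have F2 : ¬(t' < v ∧ v < s') := fun hx => hB ⟨(s',t'), hst'', hx.1, hx.2⟩
      refine ⟨?_, ?_, ?_⟩
      · rintro ⟨⟨a, b⟩, hr, hp1, hp2⟩
        dsimp only at hp1 hp2
        by_cases hx : (a, b) = (s, t)
        · rw [Prod.mk.injEq] at hx; omega
        · exact hA ⟨(a, b), (hmem _).mpr ⟨hr, hx⟩, hp1, hp2⟩
      · rintro ⟨⟨a, b⟩, hr, hp1, hp2⟩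
        dsimp only at hp1 hp2
        by_cases hx : (a, b) = (s, t)
        · rw [Prod.mk.injEq] at hx; omega
        · exact hB ⟨(a, b), (hmem _).mpr ⟨hr, hx⟩, hp1, hp2⟩
      · obtain ⟨r, hr, hp⟩ := hC
        exact ⟨r, ((hmem _).mp hr).1, hp⟩

lemma merge_rl {D D' : Finset (ℕ × ℕ)} (h : MergeStep D D')
    (hrl : ∀ r ∈ D, r.2 < r.1) : ∀ r ∈ D', r.2 < r.1 := by
  obtain ⟨s, t, s', t', hst, hst', hne, h1, h2, h3, h4, h5, rfl⟩ := h
  intro r hr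
  rcases Finset.mem_insert.mp hr with rfl | hr
  · exact lt_of_le_of_lt h3 h1
  · exact hrl r (Finset.mem_of_mem_erase (Finset.mem_of_mem_erase hr))

lemma drop_subset {D D' : Finset (ℕ × ℕ)} (h : DropStep D D') : D' ⊆ D := by
  obtain ⟨s, t, s', t', _, _, _, _, _, _, rfl⟩ := h
  exact Finset.erase_subset _ _

lemma normal_form {C : Finset (ℕ × ℕ)} (hrl : ∀ r ∈ C, r.2 < r.1)
    (hm : ∀ D', ¬ MergeStep C D') (hd : ∀ D', ¬ DropStep C D') :
    Lset C = {v | ∃ r ∈ C, r.2 = v} ∧ Rset C = {v | ∃ r ∈ C, r.1 = v} := by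
  constructor
  · ext v
    simp only [Lset, Set.mem_setOf_eq]
    constructor
    · rintro ⟨⟨r, hr, hp⟩, _, _⟩
      exact ⟨r, hr, hp.1⟩
    · rintro ⟨⟨a, b⟩, hr, hp⟩
      dsimp only at hp
      have hab : b < a := hrl _ hr
      refine ⟨⟨(a, b), hr, hp, hp ▸ hab⟩, ?_, ?_⟩
      · rintro ⟨⟨a', b'⟩, hr', hp1, hp2⟩
        dsimp only at hp1 hp2
        have hab' : b' < a' := hrl _ hr'
        have hne : (a, b) ≠ (a', b') := by
          intro hx; rw [Prod.mk.injEq] at hx; omega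
        by_cases hc : a' ≤ a
        · exact hm _ ⟨a, b, a', b', hr, hr', hne, hab, hab', by omega,
            by omega, hc, rfl⟩
        · exact hd _ ⟨a, b, a', b', hr, hr', hne, by omega, hab, by omega, rfl⟩
      · rintro ⟨⟨a', b'⟩, hr', hp1, hp2⟩
        dsimp only at hp1 hp2
        have hab' : b' < a' := hrl _ hr'
        have hne : (a, b) ≠ (a', b') := by
          intro hx; rw [Prod.mk.injEq] at hx; omega
        exact hm _ ⟨a, b, a', b', hr, hr', hne, hab, hab', by omega, by omega,
          by omega, rfl⟩
  · ext v
    simp only [Rset, Set.mem_setOf_eq]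
    constructor
    · rintro ⟨_, _, ⟨r, hr, _, hp⟩⟩
      exact ⟨r, hr, hp.symm⟩
    · rintro ⟨⟨a, b⟩, hr, hp⟩
      dsimp only at hp
      have hab : b < a := hrl _ hr
      refine ⟨?_, ?_, ⟨(a, b), hr, hp ▸ hab, hp.symm⟩⟩
      · rintro ⟨⟨a', b'⟩, hr', hp1, hp2⟩
        dsimp only at hp1 hp2
        have hab' : b' < a' := hrl _ hr'
        have hne : (a', b') ≠ (a, b) := by
          intro hx; rw [Prod.mk.injEq] at hx; omega
        exact hm _ ⟨a', b', a, b, hr', hr, hne, hab', hab, by omega, by omega,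
          by omega, rfl⟩
      · rintro ⟨⟨a', b'⟩, hr', hp1, hp2⟩
        dsimp only at hp1 hp2
        have hab' : b' < a' := hrl _ hr'
        by_cases hc : b' ≤ b
        · have hne : (a, b) ≠ (a', b') := by
            intro hx; rw [Prod.mk.injEq] at hx; omega
          exact hd _ ⟨a, b, a', b', hr, hr', hne, hc, hab, by omega, rfl⟩
        · have hne : (a', b') ≠ (a, b) := by
            intro hx; rw [Prod.mk.injEq] at hx; omega
          exact hm _ ⟨a', b', a, b, hr', hr, hne, hab', hab, by omega,
            by omega, by omega, rfl⟩

lemma rtg_merge {A B : Finset (ℕ × ℕ)} (h : Relation.ReflTransGen MergeStep A B)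
    (hrl : ∀ r ∈ A, r.2 < r.1) :
    (Lset A = Lset B ∧ Rset A = Rset B) ∧ ∀ r ∈ B, r.2 < r.1 := by
  induction h with
  | refl => exact ⟨⟨rfl, rfl⟩, hrl⟩
  | tail _ h ih =>
    obtain ⟨⟨hL, hR⟩, hrl'⟩ := ih
    obtain ⟨hL2, hR2⟩ := merge_inv h
    exact ⟨⟨hL.trans hL2, hR.trans hR2⟩, merge_rl h hrl'⟩

lemma rtg_drop {A B : Finset (ℕ × ℕ)} (h : Relation.ReflTransGen DropStep A B) :
    (Lset A = Lset B ∧ Rset A = Rset B) ∧ B ⊆ A := by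
  induction h with
  | refl => exact ⟨⟨rfl, rfl⟩, Finset.Subset.refl _⟩
  | tail _ h ih =>
    obtain ⟨⟨hL, hR⟩, hsub⟩ := ih
    obtain ⟨hL2, hR2⟩ := drop_inv h
    exact ⟨⟨hL.trans hL2, hR.trans hR2⟩, Finset.Subset.trans (drop_subset h) hsub⟩

/-- if `Cstar` is the output of `Normalize` on `Ĉ` (all requests
right-to-left), then `L(Ĉ)` is exactly the set of terminating nodes of `Cstar`
and `R(Ĉ)` exactly the set of its starting nodes. -/
theorem Lset_Rset_of_normalize (Chat Cstar : Finset (ℕ × ℕ))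
    (hrl : ∀ r ∈ Chat, r.2 < r.1)
    (hout : NormalizeOutput Chat Cstar) :
    Lset Chat = {v | ∃ r ∈ Cstar, r.2 = v} ∧
    Rset Chat = {v | ∃ r ∈ Cstar, r.1 = v} := by
  obtain ⟨D1, hm1, hmmax, hd1, hdmax⟩ := hout
  obtain ⟨⟨hL1, hR1⟩, hrl1⟩ := rtg_merge hm1 hrl
  obtain ⟨⟨hL2, hR2⟩, hsub⟩ := rtg_drop hd1
  have hrlC : ∀ r ∈ Cstar, r.2 < r.1 := fun r hr => hrl1 r (hsub hr)
  have hmC : ∀ D', ¬ MergeStep Cstar D' := by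
    rintro D' ⟨s, t, s', t', hst, hst', hne, h1, h2, h3, h4, h5, _⟩
    exact hmmax _ ⟨s, t, s', t', hsub hst, hsub hst', hne, h1, h2, h3, h4, h5, rfl⟩
  obtain ⟨e1, e2⟩ := normal_form hrlC hmC hdmax
  exact ⟨hL1.trans (hL2.trans e1), hR1.trans (hR2.trans e2)⟩


end RideSharing
end

section
/- Let π be a feasible ride for a cycle scenario R with cw(π) ≤ 3n and acwIdx(π) ≤ cwIdx(π). Setting α = acw(π), β = cw(π), (s°,t°) = (α,β), the 'unrolled' sequence τ_π(1),…,τ_π(len(π)) is a feasible ride for the path scenario ⟨G°,(τ_π(1), τ_π(len(π))), C°_{α,β} ∪ {(s°,t°)}⟩. -/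
namespace RideSharing

/-- The cycle graph on `{1,…,n}`. -/
def cycAdj (n : ℕ) (a b : ℕ) : Prop :=
  (b = a + 1 ∨ a = b + 1 ∨ (a = n ∧ b = 1) ∨ (a = 1 ∧ b = n)) ∧
    1 ≤ a ∧ a ≤ n ∧ 1 ≤ b ∧ b ≤ n

/-- Auxiliary computation of the winding numbers `ℓ_π`. -/
def ellAux (n : ℕ) : ℕ → ℤ → List ℕ → List ℤ
  | _, _, [] => []
  | prev, cur, x :: xs =>
    let c : ℤ := if prev = n ∧ x = 1 then cur + 1
      else if prev = 1 ∧ x = n then cur - 1 else cur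
    c :: ellAux n x c xs

/-- The list of winding numbers `ℓ_π(1),…,ℓ_π(len π)` (with `ℓ_π(1) = 0`). -/
def ellList (n : ℕ) : List ℕ → List ℤ
  | [] => []
  | x :: xs => 0 :: ellAux n x 0 xs

/-- The unrolled ride `τ_π(i) = π_i + (ℓ_π(i) − min_j ℓ_π(j))·n`. -/
def tauList (n : ℕ) (π : List ℕ) : List ℤ :=
  ((π.zip (ellList n π)).map
    (fun p => (p.1 : ℤ) + (p.2 - (ellList n π).foldr min 0) * n))

/-- `cw(π)`: maximum of `τ_π`. -/
def cw (n : ℕ) (π : List ℕ) : ℤ :=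
  (tauList n π).foldr max ((tauList n π).headD 0)

/-- `acw(π)`: minimum of `τ_π`. -/
def acw (n : ℕ) (π : List ℕ) : ℤ :=
  (tauList n π).foldr min ((tauList n π).headD 0)

/-- First time step at which `τ_π` attains `acw(π)`. -/
def acwIdx (n : ℕ) (π : List ℕ) : ℕ := (tauList n π).idxOf (acw n π)

/-- First time step at which `τ_π` attains `cw(π)`. -/
def cwIdx (n : ℕ) (π : List ℕ) : ℕ := (tauList n π).idxOf (cw n π)

/-- `mod n` with representatives in `{1,…,n}`, for natural numbers. -/
def mod1 (n v : ℕ) : ℕ := (v - 1) % n + 1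

/-- `mod n` with representatives in `{1,…,n}`, for integers. -/
def mod1Z (n : ℕ) (x : ℤ) : ℕ := ((x - 1) % (n : ℤ)).toNat + 1

/-- The weight function of the unrolled path `G°` on `{1,…,3n}`. -/
def wPath (n : ℕ) (w : ℕ → ℕ → ℚ) (a b : ℕ) : ℚ := w (mod1 n a) (mod1 n b)

/-- `V°_{α,β}`: nodes of `{α,…,β}` whose residue mod `n` is uniquely represented
in `{α,…,β}`. -/
def Vab (n  α β : ℕ) : Finset ℕ :=
  (Finset.Icc α β).filter (fun v =>
    ∀ v' ∈ Finset.Icc α β, mod1 n v' = mod1 n v → v' = v)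

/-- `C°_{α,β}`: the requests of `C` lifted to uniquely represented nodes of
`{α,…,β}`. -/
def Cab (n : ℕ) (C : Finset (ℕ × ℕ)) (α β : ℕ) : Finset (ℕ × ℕ) :=
  ((Finset.Icc α β) ×ˢ (Finset.Icc α β)).filter (fun p =>
    (mod1 n p.1, mod1 n p.2) ∈ C ∧ p.1 ∈ Vab n α β ∧ p.2 ∈ Vab n α β)

lemma ellAux_length (n a : ℕ) (c : ℤ) (xs : List ℕ) : (ellAux n a c xs).length = xs.length := by
  induction xs generalizing a c with
  | nil => rfl
  | cons b xs ih => simp [ellAux, ih]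

lemma ellList_length (n : ℕ) (π : List ℕ) : (ellList n π).length = π.length := by
  cases π with
  | nil => rfl
  | cons a xs => simp [ellList, ellAux_length]

lemma tauList_length (n : ℕ) (π : List ℕ) : (tauList n π).length = π.length := by
  simp [tauList, List.length_zip, ellList_length]

lemma foldr_min_le {l : List ℤ} {b x : ℤ} (hx : x ∈ l) : l.foldr min b ≤ x := by
  induction l with
  | nil => simp at hx
  | cons a t ih =>
    rcases List.mem_cons.1 hx with rfl | hx
    · exact min_le_left _ _
    · exact le_trans (min_le_right _ _) (ih hx)

lemma le_foldr_max {l : List ℤ} {b x : ℤ} (hx : x ∈ l) : x ≤ l.foldr max b := by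
  induction l with
  | nil => simp at hx
  | cons a t ih =>
    rcases List.mem_cons.1 hx with rfl | hx
    · exact le_max_left _ _
    · exact le_trans (ih hx) (le_max_right _ _)

lemma foldr_min_mem (l : List ℤ) (b : ℤ) : l.foldr min b ∈ l ∨ l.foldr min b = b := by
  induction l with
  | nil => simp
  | cons a t ih =>
    rcases min_choice a (t.foldr min b) with h | h
    · left; simp only [List.foldr_cons, h]; exact List.mem_cons_self
    · simp only [List.foldr_cons, h]
      rcases ih with h' | h'
      · exact Or.inl (List.mem_cons_of_mem _ h')
      · exact Or.inr h'

lemma foldr_max_mem (l : List ℤ) (b : ℤ) : l.foldr max b ∈ l ∨ l.foldr max b = b := by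
  induction l with
  | nil => simp
  | cons a t ih =>
    rcases max_choice a (t.foldr max b) with h | h
    · left; simp only [List.foldr_cons, h]; exact List.mem_cons_self
    · simp only [List.foldr_cons, h]
      rcases ih with h' | h'
      · exact Or.inl (List.mem_cons_of_mem _ h')
      · exact Or.inr h'

lemma chain_mem_bounds {n a : ℕ} {xs : List ℕ} (ha : 1 ≤ a ∧ a ≤ n)
    (h : List.Chain (cycAdj n) a xs) : ∀ x ∈ a :: xs, 1 ≤ x ∧ x ≤ n := by
  induction xs generalizing a with
  | nil => intro x hx; rw [List.mem_singleton] at hx; subst hx; exact ha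
  | cons b xs ih =>
    rcases List.chain_cons.1 h with ⟨hab, hchain⟩
    intro x hx
    rcases List.mem_cons.1 hx with rfl | hx
    · exact ha
    · exact ih ⟨hab.2.2.2.1, hab.2.2.2.2⟩ hchain x hx

lemma chain_tau (n : ℕ) (hn : 3 ≤ n) (m : ℤ) (a : ℕ) (c : ℤ) (xs : List ℕ)
    (h : List.Chain (cycAdj n) a xs) :
    List.Chain (fun p q : ℤ => q = p + 1 ∨ p = q + 1)
      ((a : ℤ) + (c - m) * n)
      ((xs.zip (ellAux n a c xs)).map (fun p => (p.1 : ℤ) + (p.2 - m) * n)) := by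
  induction xs generalizing a c with
  | nil => simp [ellAux, List.Chain]
  | cons b xs ih =>
    rcases List.chain_cons.1 h with ⟨hab, hchain⟩
    obtain ⟨hd, ha1, han, hb1, hbn⟩ := hab
    simp only [ellAux, List.zip_cons_cons, List.map_cons]
    refine List.chain_cons.2 ⟨?_, ih b _ hchain⟩
    rcases hd with h1 | h1 | h1 | h1
    · rw [if_neg (by omega), if_neg (by omega)]
      left; have : (b : ℤ) = a + 1 := by exact_mod_cast h1
      linarith
    · rw [if_neg (by omega), if_neg (by omega)]
      right; have : (a : ℤ) = b + 1 := by exact_mod_cast h1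
      linarith
    · rw [if_pos h1]
      left
      have h2 : (a : ℤ) = n := by exact_mod_cast h1.1
      have h3 : (b : ℤ) = 1 := by exact_mod_cast h1.2
      rw [h2, h3]; ring
    · rw [if_neg (by omega), if_pos h1]
      right
      have h2 : (a : ℤ) = 1 := by exact_mod_cast h1.1
      have h3 : (b : ℤ) = n := by exact_mod_cast h1.2
      rw [h2, h3]; ring


lemma tauList_getElem (n : ℕ) (π : List ℕ) (i : ℕ) (h : i < (tauList n π).length) :
    (tauList n π)[i] = ((π[i]'(by rwa [tauList_length] at h) : ℕ) : ℤ) +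
      ((ellList n π)[i]'(by rw [ellList_length]; rwa [tauList_length] at h)
        - (ellList n π).foldr min 0) * n := by
  simp [tauList, List.getElem_map, List.getElem_zip]

lemma chain'_and_mem {R : ℤ → ℤ → Prop} {P : ℤ → Prop} {l : List ℤ}
    (h : l.Chain' R) (hP : ∀ x ∈ l, P x) :
    l.Chain' (fun a b => R a b ∧ P a ∧ P b) := by
  induction l with
  | nil => exact List.IsChain.nil
  | cons a t ih =>
    cases t with
    | nil => exact List.IsChain.singleton _
    | cons b t =>
      unfold List.Chain' at h ⊢
      rw [List.isChain_cons_cons] at h ⊢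
      refine ⟨⟨h.1, hP a (by simp), hP b (by simp)⟩, ih h.2 ?_⟩
      intro x hx
      exact hP x (List.mem_cons_of_mem _ hx)

lemma mod1_add_mul (n p K : ℕ) (hp1 : 1 ≤ p) (hpn : p ≤ n) : mod1 n (p + K * n) = p := by
  unfold mod1
  have h1 : p + K * n - 1 = (p - 1) + K * n := by omega
  rw [h1, Nat.add_mul_mod_self_right, Nat.mod_eq_of_lt (by omega)]
  omega

/-- a feasible ride `π` on the cycle with `cw(π) ≤ 3n` and
`acwIdx(π) ≤ cwIdx(π)` unrolls, via `τ_π`, to a feasible ride for the path scenario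
`⟨G°, (τ_π(1), τ_π(len π)), C°_{α,β} ∪ {(α,β)}⟩` where `α = acw(π)`, `β = cw(π)`. -/
theorem unroll_feasible (n : ℕ) (hn : 3 ≤ n) (w : ℕ → ℕ → ℚ)
    (t0 : ℕ) (C : Finset (ℕ × ℕ)) (ht0 : 1 ≤ t0 ∧ t0 ≤ n)
    (hC : ∀ r ∈ C, 1 ≤ r.1 ∧ r.1 ≤ n ∧ 1 ≤ r.2 ∧ r.2 ≤ n)
    (π : List ℕ) (hfeas : Feasible ⟨cycAdj n, w, 1, t0, C⟩ π)
    (hcw : cw n π ≤ 3 * n) (hidx : acwIdx n π ≤ cwIdx n π) :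
    Feasible ⟨pathAdj (3 * n), wPath n w,
        ((tauList n π).headD 0).toNat, ((tauList n π).getLastD 0).toNat,
        insert ((acw n π).toNat, (cw n π).toNat)
          (Cab n C (acw n π).toNat (cw n π).toNat)⟩
      ((tauList n π).map Int.toNat) := by
  obtain ⟨⟨hne, hchain'⟩, hhead, hlast, hsat⟩ := hfeas
  obtain ⟨a, xs, rfl⟩ := List.exists_cons_of_ne_nil hne
  have ha : a = 1 := by simpa using hhead
  subst ha
  have hchain : List.Chain (cycAdj n) 1 xs := hchain'
  set π : List ℕ := 1 :: xs with hπdef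
  set m : ℤ := (ellList n π).foldr min 0 with hm
  set L : List ℤ := tauList n π with hL
  have hLlen : L.length = π.length := tauList_length n π
  have hLne : L ≠ [] := by
    intro h
    have := hLlen
    rw [h] at this
    simp [hπdef] at this
  have hbnd : ∀ x ∈ π, 1 ≤ x ∧ x ≤ n := chain_mem_bounds ⟨le_refl 1, by omega⟩ hchain
  have hLdecomp : L = ((1:ℤ) + (0 - m) * n) ::
      ((xs.zip (ellAux n 1 0 xs)).map (fun p => (p.1 : ℤ) + (p.2 - m) * n)) := by
    simp [hL, tauList, hπdef, ellList, hm]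
  have hLpos : ∀ t ∈ L, 1 ≤ t := by
    intro t ht
    rw [hL, tauList] at ht
    obtain ⟨p, hp, rfl⟩ := List.mem_map.1 ht
    obtain ⟨hp1, hp2⟩ := List.of_mem_zip hp
    have h1 : 1 ≤ p.1 := (hbnd p.1 hp1).1
    have h2 : m ≤ p.2 := foldr_min_le hp2
    have h3 : (0:ℤ) ≤ (p.2 - m) * n := mul_nonneg (by linarith) (by positivity)
    have : (1:ℤ) ≤ (p.1 : ℤ) := by exact_mod_cast h1
    linarith
  -- acw / cw facts
  have hacw_mem : acw n π ∈ L := by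
    rw [acw]
    rcases foldr_min_mem (tauList n π) ((tauList n π).headD 0) with h | h
    · exact h
    · rw [h, hLdecomp]; simp [← hL, hLdecomp]
  have hcw_mem : cw n π ∈ L := by
    rw [cw]
    rcases foldr_max_mem (tauList n π) ((tauList n π).headD 0) with h | h
    · exact h
    · rw [h, hLdecomp]; simp [← hL, hLdecomp]
  have hacw_le : ∀ t ∈ L, acw n π ≤ t := fun t ht => foldr_min_le ht
  have hcw_ge : ∀ t ∈ L, t ≤ cw n π := fun t ht => le_foldr_max ht
  have hacw1 : 1 ≤ acw n π := hLpos _ hacw_mem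
  have hLle : ∀ t ∈ L, t ≤ 3 * n := fun t ht => le_trans (hcw_ge t ht) (by exact_mod_cast hcw)
  -- the key lifting fact
  have key : ∀ (i s : ℕ), π[i]? = some s → ∃ v, (L.map Int.toNat)[i]? = some v ∧
      mod1 n v = s ∧ v ∈ Finset.Icc (acw n π).toNat (cw n π).toNat := by
    intro i s hs
    obtain ⟨hilt, hival⟩ := List.getElem?_eq_some_iff.1 hs
    have hiL : i < L.length := by rwa [hLlen]
    have hiM : i < (L.map Int.toNat).length := by simpa using hiL
    have hget : (L.map Int.toNat)[i]? = some ((L[i]'hiL).toNat) := by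
      rw [List.getElem?_eq_getElem hiM, List.getElem_map]
    have hie : i < (ellList n π).length := by rw [ellList_length]; exact hilt
    have hval : L[i]'hiL = (s : ℤ) + ((ellList n π)[i]'hie - m) * n := by
      have h := tauList_getElem n π i (by rw [tauList_length]; exact hilt)
      simp only [hival] at h
      exact h
    have hellmem : (ellList n π)[i]'hie ∈ ellList n π := List.getElem_mem _
    have hellge : m ≤ (ellList n π)[i]'hie := foldr_min_le hellmem
    set K : ℕ := ((ellList n π)[i]'hie - m).toNat with hK
    have hKcast : (K : ℤ) = (ellList n π)[i]'hie - m := Int.toNat_of_nonneg (by linarith)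
    have hs1 : 1 ≤ s := (hbnd s (hival ▸ List.getElem_mem hilt)).1
    have hsn : s ≤ n := (hbnd s (hival ▸ List.getElem_mem hilt)).2
    have htoNat : (L[i]'hiL).toNat = s + K * n := by
      have h0 : (0:ℤ) ≤ L[i]'hiL := le_trans (by norm_num) (hLpos _ (List.getElem_mem hiL))
      have : ((L[i]'hiL).toNat : ℤ) = ((s + K * n : ℕ) : ℤ) := by
        rw [Int.toNat_of_nonneg h0, hval]
        push_cast [hKcast]
        ring
      exact_mod_cast this
    refine ⟨(L[i]'hiL).toNat, hget, ?_, ?_⟩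
    · rw [htoNat, mod1_add_mul n s K hs1 hsn]
    · have hmemL : L[i]'hiL ∈ L := List.getElem_mem hiL
      rw [Finset.mem_Icc]
      exact ⟨Int.toNat_le_toNat (hacw_le _ hmemL), Int.toNat_le_toNat (hcw_ge _ hmemL)⟩
  refine ⟨⟨?_, ?_⟩, ?_, ?_, ?_⟩
  · -- nonempty
    simp [hLne]
  · -- chain pathAdj
    have hchainL : L.Chain' (fun p q : ℤ => q = p + 1 ∨ p = q + 1) := by
      rw [hLdecomp]
      show List.Chain _ _ _
      simpa using chain_tau n hn m 1 0 xs hchain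
    have hcomb := chain'_and_mem (P := fun t => 1 ≤ t ∧ t ≤ 3 * n) hchainL
      (fun x hx => ⟨hLpos x hx, hLle x hx⟩)
    unfold List.Chain'
    rw [List.isChain_map]
    refine hcomb.imp ?_
    rintro a b ⟨hr, ⟨ha1, ha2⟩, ⟨hb1, hb2⟩⟩
    unfold pathAdj
    omega
  · -- head
    obtain ⟨h, t, hht⟩ := List.exists_cons_of_ne_nil hLne
    rw [hht]
    simp
  · -- last
    rw [List.getLast?_map, List.getLastD_eq_getLast?,
      List.getLast?_eq_getLast hLne]
    simp
  · -- requests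
    rintro ⟨vs, vt⟩ hr
    rcases Finset.mem_insert.1 hr with heq | hmem
    · -- the request (acw, cw)
      obtain ⟨hvs, hvt⟩ := Prod.mk.inj heq
      subst hvs; subst hvt
      have hia : acwIdx n π < L.length := by
        rw [acwIdx, ← hL]; exact List.idxOf_lt_length_iff.2 hacw_mem
      have hic : cwIdx n π < L.length := by
        rw [cwIdx, ← hL]; exact List.idxOf_lt_length_iff.2 hcw_mem
      refine ⟨acwIdx n π, cwIdx n π, hidx, ?_, ?_⟩
      · rw [List.getElem?_eq_getElem (by simpa using hia), List.getElem_map]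
        congr 1
        show (L[List.idxOf (acw n π) L]'(by rwa [acwIdx, ← hL] at hia)).toNat = _
        rw [List.getElem_idxOf]
      · rw [List.getElem?_eq_getElem (by simpa using hic), List.getElem_map]
        congr 1
        show (L[List.idxOf (cw n π) L]'(by rwa [cwIdx, ← hL] at hic)).toNat = _
        rw [List.getElem_idxOf]
    · -- a lifted request
      rw [Cab, Finset.mem_filter, Finset.mem_product] at hmem
      obtain ⟨⟨hvsI, hvtI⟩, hCmem, hvsV, hvtV⟩ := hmem
      obtain ⟨i, j, hij, hi, hj⟩ := hsat _ hCmem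
      simp only at hi hj
      obtain ⟨v1, hgi, hmodi, hIcci⟩ := key i _ hi
      obtain ⟨v2, hgj, hmodj, hIccj⟩ := key j _ hj
      rw [Vab, Finset.mem_filter] at hvsV hvtV
      have hvs_eq := hvsV.2 _ hIcci hmodi
      have hvt_eq := hvtV.2 _ hIccj hmodj
      exact ⟨i, j, hij, hvs_eq ▸ hgi, hvt_eq ▸ hgj⟩


end RideSharing
end

section
/- Let α, β ∈ V° with {α mod n, β mod n} ⊆ V_C ∪ {s₀,t₀}, 1 ≤ α, β ≤ 3n, such that for each x ∈ V_C ∪ {s₀,t₀} there is v_x with α ≤ v_x ≤ β and v_x mod n = x; let v_{s₀}, v_{t₀} ∈ [α,β] with v_{s₀} mod n = s₀, v_{t₀} mod n = t₀; let (s°,t°) ∈ {(α,β),(β,α)}. If π° is feasible for the path scenario ⟨G°,(v_{s₀},v_{t₀}), C°_{α,β} ∪ {(s°,t°)}⟩, then the projected sequence π°₁ mod n, …, π°_{len(π°)} mod n is a feasible ride for the cycle scenario R. -/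
namespace RideSharing

lemma mod1_one_le (n v : ℕ) : 1 ≤ mod1 n v := Nat.le_add_left 1 _

lemma mod1_le_n {n : ℕ} (hn : 0 < n) (v : ℕ) : mod1 n v ≤ n :=
  Nat.succ_le_of_lt (Nat.mod_lt _ hn)

lemma mod1_add_n {n v : ℕ} (hv : 1 ≤ v) : mod1 n (v + n) = mod1 n v := by
  unfold mod1
  have h : v + n - 1 = (v - 1) + n := by omega
  rw [h, Nat.add_mod_right]

lemma mod1_succ {n : ℕ} (hn : 3 ≤ n) {a : ℕ} (ha : 1 ≤ a) :
    mod1 n (a + 1) = mod1 n a + 1 ∨ (mod1 n a = n ∧ mod1 n (a + 1) = 1) := by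
  unfold mod1
  have h1 : a + 1 - 1 = (a - 1) + 1 := by omega
  rw [h1]
  have h2 : ((a - 1) + 1) % n = ((a - 1) % n + 1) % n := by
    rw [Nat.add_mod, Nat.one_mod_eq_one.mpr (by omega)]
  have h3 : (a - 1) % n < n := Nat.mod_lt _ (by omega)
  rcases Nat.lt_or_ge ((a - 1) % n + 1) n with h4 | h4
  · left
    rw [h2, Nat.mod_eq_of_lt h4]
  · right
    have h5 : (a - 1) % n + 1 = n := by omega
    exact ⟨h5, by rw [h2, h5, Nat.mod_self]⟩

lemma proj_adj {n : ℕ} (hn : 3 ≤ n) {a b : ℕ} (h : pathAdj (3 * n) a b) :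
    cycAdj n (mod1 n a) (mod1 n b) := by
  obtain ⟨hd, ha1, ha2, hb1, hb2⟩ := h
  refine ⟨?_, mod1_one_le n a, mod1_le_n (by omega) a, mod1_one_le n b,
    mod1_le_n (by omega) b⟩
  rcases hd with rfl | rfl
  · rcases mod1_succ hn ha1 with h | ⟨h1, h2⟩
    · exact Or.inl h
    · exact Or.inr (Or.inr (Or.inl ⟨h1, h2⟩))
  · rcases mod1_succ hn hb1 with h | ⟨h1, h2⟩
    · exact Or.inr (Or.inl h)
    · exact Or.inr (Or.inr (Or.inr ⟨h2, h1⟩))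

lemma double_rep {n α β v : ℕ} (hα : 1 ≤ α) (hv1 : α ≤ v) (hv2 : v ≤ β)
    (hnv : v ∉ Vab n α β) :
    ∃ a, α ≤ a ∧ a + n ≤ β ∧ mod1 n a = mod1 n v := by
  have hmem : v ∈ Finset.Icc α β := Finset.mem_Icc.mpr ⟨hv1, hv2⟩
  rw [Vab, Finset.mem_filter] at hnv
  push_neg at hnv
  obtain ⟨v', hv'1, hv'2, hv'3⟩ := hnv hmem
  rw [Finset.mem_Icc] at hv'1
  have gap : ∀ x y : ℕ, 1 ≤ x → x < y → mod1 n x = mod1 n y → x + n ≤ y := by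
    intro x y hx hxy hm
    have hm' : (x - 1) % n = (y - 1) % n := by
      unfold mod1 at hm; omega
    have hd : n ∣ (y - 1) - (x - 1) := (Nat.modEq_iff_dvd' (by omega)).mp hm'
    have hne : (y - 1) - (x - 1) ≠ 0 := by omega
    have := Nat.le_of_dvd (by omega) hd
    omega
  rcases lt_or_gt_of_ne hv'3 with h | h
  · exact ⟨v', hv'1.1, by have := gap v' v (by omega) h hv'2; omega, hv'2⟩
  · exact ⟨v, hv1, by have := gap v v' (by omega) h hv'2.symm; omega, rfl⟩

lemma exists_rep_ge {n α β v u : ℕ} (hα : 1 ≤ α) (hβ : β ≤ 3 * n)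
    (hv1 : α ≤ v) (hv2 : v + n ≤ β) (hu1 : α ≤ u) (hu2 : u ≤ β) :
    ∃ x, α ≤ x ∧ x ≤ β ∧ mod1 n x = mod1 n u ∧ v ≤ x := by
  rcases le_or_gt v u with h | h
  · exact ⟨u, hu1, hu2, rfl, h⟩
  rcases le_or_gt v (u + n) with h2 | h2
  · exact ⟨u + n, by omega, by omega, mod1_add_n (by omega), h2⟩
  · refine ⟨u + 2 * n, by omega, by omega, ?_, by omega⟩
    have e1 : u + 2 * n = (u + n) + n := by omega
    rw [e1, mod1_add_n (by omega), mod1_add_n (by omega)]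

lemma exists_rep_le {n α β v u : ℕ} (hα : 1 ≤ α) (hβ : β ≤ 3 * n)
    (hv1 : α ≤ v) (hv2 : v + n ≤ β) (hu1 : α ≤ u) (hu2 : u ≤ β) :
    ∃ x, α ≤ x ∧ x ≤ β ∧ mod1 n x = mod1 n u ∧ x ≤ v + n := by
  rcases le_or_gt u (v + n) with h | h
  · exact ⟨u, hu1, hu2, rfl, h⟩
  have hm1 : mod1 n (u - n) = mod1 n u := by
    have e : (u - n) + n = u := by omega
    conv_rhs => rw [← e]
    rw [mod1_add_n (by omega)]
  rcases le_or_gt (u - n) (v + n) with h2 | h2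
  · exact ⟨u - n, by omega, by omega, hm1, h2⟩
  · have hm2 : mod1 n (u - 2 * n) = mod1 n u := by
      have e : (u - 2 * n) + n = u - n := by omega
      rw [← hm1, ← e, mod1_add_n (by omega)]
    exact ⟨u - 2 * n, by omega, by omega, hm2, by omega⟩

lemma reps_le {n α β vS vT : ℕ} (hα : 1 ≤ α) (hβ : β ≤ 3 * n)
    (hvS1 : α ≤ vS) (hvS2 : vS ≤ β) (hvT1 : α ≤ vT) (hvT2 : vT ≤ β)
    (hdv : (∃ a, α ≤ a ∧ a + n ≤ β ∧ mod1 n a = mod1 n vS) ∨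
      (∃ a, α ≤ a ∧ a + n ≤ β ∧ mod1 n a = mod1 n vT)) :
    ∃ xs xt, α ≤ xs ∧ xs ≤ β ∧ α ≤ xt ∧ xt ≤ β ∧
      mod1 n xs = mod1 n vS ∧ mod1 n xt = mod1 n vT ∧ xs ≤ xt := by
  rcases hdv with ⟨a, ha1, ha2, ha3⟩ | ⟨a, ha1, ha2, ha3⟩
  · obtain ⟨x, hx1, hx2, hx3, hx4⟩ := exists_rep_ge hα hβ ha1 ha2 hvT1 hvT2
    exact ⟨a, x, ha1, by omega, hx1, hx2, ha3, hx3, hx4⟩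
  · obtain ⟨x, hx1, hx2, hx3, hx4⟩ := exists_rep_le hα hβ ha1 ha2 hvS1 hvS2
    refine ⟨x, a + n, hx1, hx2, by omega, by omega, hx3, ?_, hx4⟩
    rw [mod1_add_n (by omega)]; exact ha3

lemma ivt_up_fun (f : ℕ → ℕ) (c : ℕ) :
    ∀ (d i0 : ℕ), (∀ k, i0 ≤ k → k < i0 + d → f (k + 1) = f k + 1 ∨ f k = f (k + 1) + 1) →
      f i0 ≤ c → c ≤ f (i0 + d) → ∃ k, i0 ≤ k ∧ k ≤ i0 + d ∧ f k = c := by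
  intro d
  induction d with
  | zero =>
    intro i0 _ h1 h2
    rw [Nat.add_zero] at h2
    exact ⟨i0, le_rfl, le_rfl, le_antisymm h1 h2⟩
  | succ d ih =>
    intro i0 hstep h1 h2
    by_cases hc : f i0 = c
    · exact ⟨i0, le_rfl, by omega, hc⟩
    · have hlt : f i0 < c := lt_of_le_of_ne h1 hc
      have hs := hstep i0 le_rfl (by omega)
      have h1' : f (i0 + 1) ≤ c := by omega
      have h2' : c ≤ f (i0 + 1 + d) := by
        have e : i0 + 1 + d = i0 + (d + 1) := by omega
        rw [e]; exact h2
      obtain ⟨k, hk1, hk2, hk3⟩ :=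
        ih (i0 + 1) (fun k hk hk' => hstep k (by omega) (by omega)) h1' h2'
      exact ⟨k, by omega, by omega, hk3⟩

lemma ivt_down_fun (f : ℕ → ℕ) (c : ℕ) :
    ∀ (d i0 : ℕ), (∀ k, i0 ≤ k → k < i0 + d → f (k + 1) = f k + 1 ∨ f k = f (k + 1) + 1) →
      c ≤ f i0 → f (i0 + d) ≤ c → ∃ k, i0 ≤ k ∧ k ≤ i0 + d ∧ f k = c := by
  intro d
  induction d with
  | zero =>
    intro i0 _ h1 h2
    rw [Nat.add_zero] at h2
    exact ⟨i0, le_rfl, le_rfl, le_antisymm h2 h1⟩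
  | succ d ih =>
    intro i0 hstep h1 h2
    by_cases hc : f i0 = c
    · exact ⟨i0, le_rfl, by omega, hc⟩
    · have hlt : c < f i0 := lt_of_le_of_ne h1 (Ne.symm hc)
      have hs := hstep i0 le_rfl (by omega)
      have h1' : c ≤ f (i0 + 1) := by omega
      have h2' : f (i0 + 1 + d) ≤ c := by
        have e : i0 + 1 + d = i0 + (d + 1) := by omega
        rw [e]; exact h2
      obtain ⟨k, hk1, hk2, hk3⟩ :=
        ih (i0 + 1) (fun k hk hk' => hstep k (by omega) (by omega)) h1' h2'
      exact ⟨k, by omega, by omega, hk3⟩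

lemma list_ivt {m : ℕ} {l : List ℕ} (hl : l.Chain' (pathAdj m))
    {i0 j0 a b c : ℕ} (hij : i0 ≤ j0) (ha : l[i0]? = some a) (hb : l[j0]? = some b)
    (hdir : (a ≤ c ∧ c ≤ b) ∨ (b ≤ c ∧ c ≤ a)) :
    ∃ k, i0 ≤ k ∧ k ≤ j0 ∧ l[k]? = some c := by
  have hj0 : j0 < l.length := by
    rcases List.getElem?_eq_some_iff.mp hb with ⟨h, _⟩; exact h
  set f : ℕ → ℕ := fun k => (l[k]?).getD 0 with hf
  have hfa : f i0 = a := by simp [hf, ha]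
  have hfb : f (i0 + (j0 - i0)) = b := by
    have e : i0 + (j0 - i0) = j0 := by omega
    simp [hf, e, hb]
  have hstep : ∀ k, i0 ≤ k → k < i0 + (j0 - i0) →
      f (k + 1) = f k + 1 ∨ f k = f (k + 1) + 1 := by
    intro k hk hk'
    have hk1 : k + 1 < l.length := by omega
    have hadj := List.isChain_iff_getElem.mp hl k (by omega)
    have e1 : f k = l.get ⟨k, by omega⟩ := by
      simp [hf, List.getElem?_eq_getElem (show k < l.length by omega)]
    have e2 : f (k + 1) = l.get ⟨k + 1, by omega⟩ := by
      simp [hf, List.getElem?_eq_getElem hk1]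
    rcases hadj.1 with h | h
    · left; rw [e1, e2]; exact h
    · right; rw [e1, e2]; exact h
  have hres : ∃ k, i0 ≤ k ∧ k ≤ i0 + (j0 - i0) ∧ f k = c := by
    rcases hdir with ⟨h1, h2⟩ | ⟨h1, h2⟩
    · exact ivt_up_fun f c (j0 - i0) i0 hstep (by omega) (by omega)
    · exact ivt_down_fun f c (j0 - i0) i0 hstep (by omega) (by omega)
  obtain ⟨k, hk1, hk2, hk3⟩ := hres
  refine ⟨k, hk1, by omega, ?_⟩
  have hk4 : k < l.length := by omega
  rw [List.getElem?_eq_getElem hk4]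
  simp only [hf, List.getElem?_eq_getElem hk4, Option.getD_some] at hk3
  rw [hk3]

/-- a feasible ride for the unrolled path scenario projects, via
`mod n`, to a feasible ride for the cycle scenario. -/
theorem project_feasible (n : ℕ) (hn : 3 ≤ n) (w : ℕ → ℕ → ℚ)
    (t0 : ℕ) (C : Finset (ℕ × ℕ)) (ht0 : 1 ≤ t0 ∧ t0 ≤ n)
    (hC : ∀ r ∈ C, 1 ≤ r.1 ∧ r.1 ≤ n ∧ 1 ≤ r.2 ∧ r.2 ≤ n)
    (α β : ℕ) (hαβ : α ≤ β) (hα : 1 ≤ α ∧ α ≤ 3 * n) (hβ : 1 ≤ β ∧ β ≤ 3 * n)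
    (hmodα : mod1 n α ∈ VC C ∪ {1, t0}) (hmodβ : mod1 n β ∈ VC C ∪ {1, t0})
    (hcover : ∀ x ∈ VC C ∪ {1, t0}, ∃ v, α ≤ v ∧ v ≤ β ∧ mod1 n v = x)
    (vs0 vt0 : ℕ) (hvs0 : α ≤ vs0 ∧ vs0 ≤ β ∧ mod1 n vs0 = 1)
    (hvt0 : α ≤ vt0 ∧ vt0 ≤ β ∧ mod1 n vt0 = t0)
    (sc tc : ℕ) (hst : (sc, tc) = (α, β) ∨ (sc, tc) = (β, α))
    (πc : List ℕ)
    (hfeas : Feasible ⟨pathAdj (3 * n), wPath n w, vs0, vt0,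
        insert (sc, tc) (Cab n C α β)⟩ πc) :
    Feasible ⟨cycAdj n, w, 1, t0, C⟩ (πc.map (mod1 n)) := by
  obtain ⟨⟨hne, hchain⟩, hhead, hlast, hsat⟩ := hfeas
  refine ⟨⟨by simpa using hne, ?_⟩, ?_, ?_, ?_⟩
  · unfold List.Chain' at hchain ⊢; rw [List.isChain_map]
    exact hchain.imp (fun a b h => proj_adj hn h)
  · rw [List.head?_map, hhead]
    simp [hvs0.2.2]
  · rw [List.getLast?_map, hlast]
    simp [hvt0.2.2]
  · intro r hr
    obtain ⟨i0, j0, hij0, hpi0, hpj0⟩ := hsat (sc, tc) (Finset.mem_insert_self _ _)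
    have hr1 : r.1 ∈ VC C ∪ {1, t0} :=
      Finset.mem_union_left _ (Finset.mem_union_left _
        (Finset.mem_image.mpr ⟨r, hr, rfl⟩))
    have hr2 : r.2 ∈ VC C ∪ {1, t0} :=
      Finset.mem_union_left _ (Finset.mem_union_right _
        (Finset.mem_image.mpr ⟨r, hr, rfl⟩))
    obtain ⟨vS, hvS1, hvS2, hvS3⟩ := hcover r.1 hr1
    obtain ⟨vT, hvT1, hvT2, hvT3⟩ := hcover r.2 hr2
    by_cases huni : vS ∈ Vab n α β ∧ vT ∈ Vab n α β
    · have hmem : (vS, vT) ∈ insert (sc, tc) (Cab n C α β) := by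
        refine Finset.mem_insert_of_mem ?_
        rw [Cab, Finset.mem_filter, Finset.mem_product]
        refine ⟨⟨Finset.mem_Icc.mpr ⟨hvS1, hvS2⟩, Finset.mem_Icc.mpr ⟨hvT1, hvT2⟩⟩,
          ?_, huni.1, huni.2⟩
        simp only [hvS3, hvT3]
        exact hr
      obtain ⟨i, j, hij, hi, hj⟩ := hsat _ hmem
      refine ⟨i, j, hij, ?_, ?_⟩
      · rw [List.getElem?_map, hi]; simp [hvS3]
      · rw [List.getElem?_map, hj]; simp [hvT3]
    · have hdv : (∃ a, α ≤ a ∧ a + n ≤ β ∧ mod1 n a = mod1 n vS) ∨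
          (∃ a, α ≤ a ∧ a + n ≤ β ∧ mod1 n a = mod1 n vT) := by
        rcases not_and_or.mp huni with h | h
        · exact Or.inl (double_rep hα.1 hvS1 hvS2 h)
        · exact Or.inr (double_rep hα.1 hvT1 hvT2 h)
      rcases hst with hst | hst
      · obtain ⟨rfl, rfl⟩ : sc = α ∧ tc = β := by
          constructor <;> [exact congrArg Prod.fst hst; exact congrArg Prod.snd hst]
        obtain ⟨xs, xt, hs1, hs2, ht1, ht2, hs3, ht3, hord⟩ :=
          reps_le hα.1 hβ.2 hvS1 hvS2 hvT1 hvT2 hdv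
        obtain ⟨i, hi1, hi2, hi3⟩ := list_ivt hchain hij0 hpi0 hpj0
          (Or.inl ⟨hs1, hs2⟩)
        obtain ⟨j, hj1, hj2, hj3⟩ := list_ivt hchain hi2 hi3 hpj0
          (Or.inl ⟨hord, ht2⟩)
        refine ⟨i, j, hj1, ?_, ?_⟩
        · rw [List.getElem?_map, hi3]; simp [hs3, hvS3]
        · rw [List.getElem?_map, hj3]; simp [ht3, hvT3]
      · obtain ⟨rfl, rfl⟩ : sc = β ∧ tc = α := by
          constructor <;> [exact congrArg Prod.fst hst; exact congrArg Prod.snd hst]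
        obtain ⟨xt, xs, ht1, ht2, hs1, hs2, ht3, hs3, hord⟩ :=
          reps_le hα.1 hβ.2 hvT1 hvT2 hvS1 hvS2 hdv.symm
        obtain ⟨i, hi1, hi2, hi3⟩ := list_ivt hchain hij0 hpi0 hpj0
          (Or.inr ⟨hs1, hs2⟩)
        obtain ⟨j, hj1, hj2, hj3⟩ := list_ivt hchain hi2 hi3 hpj0
          (Or.inr ⟨ht1, hord⟩)
        refine ⟨i, j, hj1, ?_, ?_⟩
        · rw [List.getElem?_map, hi3]; simp [hs3, hvS3]
        · rw [List.getElem?_map, hj3]; simp [ht3, hvT3]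

end RideSharing
end
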